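/- arXiv:1310.7992 — 2 statements merged into one kernel-verified Lean document; each statement's English description precedes it below -/
import Mathlib

section
/- Let n ≥ 1, s ∈ (0,1), 1 < p < ∞, and let Q be the unit cube in ℝⁿ. There is a constant c, depending only on n, s and p, such that for every ε > 0 and every u ∈ L^p(ℝⁿ) with u = 0 almost everywhere in ℝⁿ ∖ Q_ε, where Q_ε = εQ, one has ∫_{Q_ε} |u(x)|^p dx ≤ c ε^{sp} [u]_{W^{s,p}(ℝⁿ)}^p. -/
open MeasureTheory ENNReal Pointwise

/-- The unit cube `Q` of `ℝⁿ`. -/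
def unitCube (n : ℕ) : Set (EuclideanSpace ℝ (Fin n)) :=
  {x | ∀ i, x i ∈ Set.Ico (0 : ℝ) 1}

/-- The scaled cube `Q_ε = ε Q`. -/
def scaledCube (n : ℕ) (ε : ℝ) : Set (EuclideanSpace ℝ (Fin n)) :=
  ε • unitCube n

/-- The `p`-th power of the Gagliardo seminorm
`[u]_{W^{s,p}(U)}^p = ∫_U ∫_U |u(x) − u(y)|^p / |x − y|^{n+sp} dx dy`. -/
noncomputable def gagliardoP (n : ℕ) (s p : ℝ) (U : Set (EuclideanSpace ℝ (Fin n)))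
    (u : EuclideanSpace ℝ (Fin n) → ℝ) : ℝ≥0∞ :=
  ∫⁻ x in U, ∫⁻ y in U, ENNReal.ofReal (|u x - u y| ^ p / ‖x - y‖ ^ ((n : ℝ) + s * p))

lemma boxEq (n : ℕ) (a b : Fin n → ℝ) :
    {x : EuclideanSpace ℝ (Fin n) | ∀ i, x i ∈ Set.Ico (a i) (b i)}
      = ((MeasurableEquiv.toLp 2 (Fin n → ℝ)).symm) ⁻¹'
        (Set.pi Set.univ fun i => Set.Ico (a i) (b i)) := by
  ext x; simp [MeasurableEquiv.toLp, Set.mem_pi]; exact Iff.rfl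

lemma boxMeas (n : ℕ) (a b : Fin n → ℝ) :
    MeasurableSet {x : EuclideanSpace ℝ (Fin n) | ∀ i, x i ∈ Set.Ico (a i) (b i)} := by
  rw [boxEq]
  exact ((MeasurableEquiv.toLp 2 (Fin n → ℝ)).symm).measurable
    (MeasurableSet.univ_pi fun i => measurableSet_Ico)

lemma boxVol (n : ℕ) (a b : Fin n → ℝ) :
    volume {x : EuclideanSpace ℝ (Fin n) | ∀ i, x i ∈ Set.Ico (a i) (b i)}
      = ∏ i, ENNReal.ofReal (b i - a i) := by
  rw [boxEq, (EuclideanSpace.volume_preserving_symm_measurableEquiv_toLp (Fin n)).measure_preimage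
    ((MeasurableSet.univ_pi fun i => measurableSet_Ico).nullMeasurableSet), volume_pi_pi]
  simp [Real.volume_Ico]

lemma scaledCube_eq (n : ℕ) {ε : ℝ} (hε : 0 < ε) :
    scaledCube n ε = {x : EuclideanSpace ℝ (Fin n) | ∀ i, x i ∈ Set.Ico (0 : ℝ) ε} := by
  ext x
  rw [scaledCube, Set.mem_smul_set_iff_inv_smul_mem₀ hε.ne']
  constructor
  · intro h i
    have := h i
    simp only [PiLp.smul_apply, smul_eq_mul, Set.mem_Ico] at this ⊢
    constructor
    · nlinarith [this.1, mul_inv_cancel₀ hε.ne', hε]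
    · nlinarith [this.2, mul_inv_cancel₀ hε.ne', hε]
  · intro h i
    have := h i
    simp only [PiLp.smul_apply, smul_eq_mul, Set.mem_Ico, unitCube] at this ⊢
    constructor
    · exact mul_nonneg (inv_pos.mpr hε).le this.1
    · rw [inv_mul_lt_iff₀ hε, mul_one]; exact this.2


/-- Fractional Poincaré inequality for functions vanishing outside the
cube `Q_ε`: there is a constant `c = c(n, s, p) > 0` such that for every `ε > 0` and every
`u ∈ L^p(ℝⁿ)` with `u = 0` a.e. in `ℝⁿ ∖ Q_ε`,
`∫_{Q_ε} |u|^p ≤ c ε^{sp} [u]_{W^{s,p}(ℝⁿ)}^p`. -/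
theorem fractional_poincare_zero_boundary
    (n : ℕ) (hn : 1 ≤ n) (s p : ℝ) (hs : s ∈ Set.Ioo (0 : ℝ) 1) (hp : 1 < p) :
    ∃ c : ℝ, 0 < c ∧ ∀ ε : ℝ, 0 < ε → ∀ u : EuclideanSpace ℝ (Fin n) → ℝ,
      MemLp u (ENNReal.ofReal p) volume →
      (∀ᵐ x ∂(volume : Measure (EuclideanSpace ℝ (Fin n))),
        x ∉ scaledCube n ε → u x = 0) →
      ∫⁻ x in scaledCube n ε, ENNReal.ofReal (|u x| ^ p)
        ≤ ENNReal.ofReal (c * ε ^ (s * p)) * gagliardoP n s p Set.univ u := by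
  obtain ⟨hs0, hs1⟩ := hs
  have hp0 : (0:ℝ) < p := by linarith
  set α : ℝ := (n : ℝ) + s * p with hα
  have hn' : (1:ℝ) ≤ n := by exact_mod_cast hn
  have h3n : (0:ℝ) < 3 * n := by linarith
  have hα0 : (0:ℝ) < α := by have : 0 < s * p := mul_pos hs0 hp0; rw [hα]; linarith
  refine ⟨(3 * (n:ℝ)) ^ α, Real.rpow_pos_of_pos h3n α, ?_⟩
  intro ε hε u _ hu0
  set i0 : Fin n := ⟨0, hn⟩ with hi0
  set a : Fin n → ℝ := fun i => if i = i0 then 2*ε else 0 with ha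
  set b : Fin n → ℝ := fun i => if i = i0 then 3*ε else ε with hb
  set Q := scaledCube n ε with hQ
  set Q' := {x : EuclideanSpace ℝ (Fin n) | ∀ i, x i ∈ Set.Ico (a i) (b i)} with hQ'
  set K : ℝ≥0∞ := ENNReal.ofReal ((3 * (n:ℝ) * ε) ^ α) with hK
  have hQeq : Q = {x : EuclideanSpace ℝ (Fin n) | ∀ i, x i ∈ Set.Ico (0:ℝ) ε} :=
    scaledCube_eq n hε
  have hQmeas : MeasurableSet Q := by rw [hQeq]; exact boxMeas n (fun _ => 0) (fun _ => ε)
  have hQ'meas : MeasurableSet Q' := boxMeas n a b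
  have hQ'vol : volume Q' = ENNReal.ofReal (ε ^ (n:ℝ)) := by
    rw [hQ', boxVol]
    have hba : ∀ i, b i - a i = ε := by
      intro i; by_cases h : i = i0 <;> simp [ha, hb, h] <;> ring
    simp only [hba]
    rw [Finset.prod_const, Finset.card_univ, Fintype.card_fin,
      ← ENNReal.ofReal_pow hε.le, ← Real.rpow_natCast]
  -- pointwise key inequality
  have key : ∀ x ∈ Q, ∀ y ∈ Q',
      ENNReal.ofReal (|u x - u y| ^ p)
        ≤ K * ENNReal.ofReal (|u x - u y| ^ p / ‖x - y‖ ^ α) := by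
    intro x hx y hy
    have hxQ := hQeq ▸ hx
    have hxi : ∀ i, (0:ℝ) ≤ x i ∧ x i < ε := fun i => hxQ i
    have hyi : ∀ i, a i ≤ y i ∧ y i < b i := fun i => hy i
    have hdiff : ∀ i, ‖x i - y i‖ ≤ 3 * ε := by
      intro i
      rw [Real.norm_eq_abs, abs_le]
      by_cases h : i = i0
      · have h1 := hxi i; have h2 := hyi i
        rw [ha, hb] at h2; simp only [h, if_pos rfl, if_true] at h2
        subst h
        constructor <;> linarith [h1.1, h1.2, h2.1, h2.2]
      · have h1 := hxi i; have h2 := hyi i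
        rw [ha, hb] at h2; simp only [if_neg h, if_true] at h2
        constructor <;> linarith [h1.1, h1.2, h2.1, h2.2]
    have hd_le : ‖x - y‖ ≤ 3 * n * ε := by
      rw [EuclideanSpace.norm_eq]
      have hsum : ∑ i, ‖(x - y) i‖ ^ 2 ≤ (3 * n * ε) ^ 2 := by
        calc ∑ i, ‖(x - y) i‖ ^ 2 ≤ ∑ _i : Fin n, (3 * ε) ^ 2 := by
              apply Finset.sum_le_sum
              intro i _
              have : (x - y) i = x i - y i := by simp
              rw [this]
              exact pow_le_pow_left₀ (norm_nonneg _) (hdiff i) 2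
          _ = n * (3 * ε) ^ 2 := by rw [Finset.sum_const, Finset.card_univ, Fintype.card_fin]; ring
          _ ≤ (3 * n * ε) ^ 2 := by nlinarith [hn', hε]
      calc Real.sqrt (∑ i, ‖(x - y) i‖ ^ 2) ≤ Real.sqrt ((3 * n * ε) ^ 2) :=
            Real.sqrt_le_sqrt hsum
        _ = 3 * n * ε := by
            rw [Real.sqrt_sq (by positivity)]
    have hd_pos : 0 < ‖x - y‖ := by
      rw [norm_pos_iff]
      intro h
      have h0 : (x - y) i0 = 0 := by rw [h]; rfl
      have : x i0 - y i0 = 0 := by simpa using h0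
      have h1 := (hxi i0).2
      have h2 := (hyi i0).1
      rw [ha] at h2; simp only [if_pos rfl, if_true] at h2
      linarith
    rw [hK, ← ENNReal.ofReal_mul (Real.rpow_nonneg (by positivity) α)]
    apply ENNReal.ofReal_le_ofReal
    have h1 : ‖x - y‖ ^ α ≤ (3 * n * ε) ^ α :=
      Real.rpow_le_rpow (norm_nonneg _) hd_le hα0.le
    have h2 : 0 < ‖x - y‖ ^ α := Real.rpow_pos_of_pos hd_pos α
    have haa : 0 ≤ |u x - u y| ^ p := Real.rpow_nonneg (abs_nonneg _) p
    calc |u x - u y| ^ p = |u x - u y| ^ p / ‖x - y‖ ^ α * ‖x - y‖ ^ α :=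
          (div_mul_cancel₀ _ h2.ne').symm
      _ ≤ |u x - u y| ^ p / ‖x - y‖ ^ α * (3 * n * ε) ^ α :=
          mul_le_mul_of_nonneg_left h1 (div_nonneg haa h2.le)
      _ = (3 * n * ε) ^ α * (|u x - u y| ^ p / ‖x - y‖ ^ α) := mul_comm _ _
  -- u vanishes a.e. on Q'
  have hQQ' : ∀ y, y ∈ Q' → y ∉ Q := by
    intro y hy hyQ
    have h1 := (hQeq ▸ hyQ) i0
    have h2 := hy i0
    rw [ha] at h2; simp only [if_pos rfl, if_true] at h2
    simp only [Set.mem_Ico] at h1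
    linarith [h1.2, h2.1]
  have hu0' : ∀ᵐ y ∂(volume.restrict Q'), u y = 0 := by
    rw [ae_restrict_iff' hQ'meas]
    filter_upwards [hu0] with y h hy
    exact h (hQQ' y hy)
  set F : EuclideanSpace ℝ (Fin n) → ℝ≥0∞ :=
    fun x => ∫⁻ y in Set.univ, ENNReal.ofReal (|u x - u y| ^ p / ‖x - y‖ ^ α) with hF
  have inner : ∀ x ∈ Q,
      ENNReal.ofReal (ε ^ (n:ℝ)) * ENNReal.ofReal (|u x| ^ p) ≤ K * F x := by
    intro x hx
    calc ENNReal.ofReal (ε ^ (n:ℝ)) * ENNReal.ofReal (|u x| ^ p)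
        = ∫⁻ _y in Q', ENNReal.ofReal (|u x| ^ p) ∂volume := by
          rw [setLIntegral_const, hQ'vol, mul_comm]
      _ = ∫⁻ y in Q', ENNReal.ofReal (|u x - u y| ^ p) ∂volume := by
          apply lintegral_congr_ae
          filter_upwards [hu0'] with y hy
          rw [hy, sub_zero]
      _ ≤ ∫⁻ y in Q', K * ENNReal.ofReal (|u x - u y| ^ p / ‖x - y‖ ^ α) ∂volume := by
          apply lintegral_mono_ae
          rw [ae_restrict_iff' hQ'meas]
          exact ae_of_all _ (fun y hy => key x hx y hy)
      _ = K * ∫⁻ y in Q', ENNReal.ofReal (|u x - u y| ^ p / ‖x - y‖ ^ α) ∂volume :=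
          lintegral_const_mul' _ _ ENNReal.ofReal_ne_top
      _ ≤ K * F x := mul_le_mul_right (lintegral_mono_set (Set.subset_univ _)) _
  have main : ENNReal.ofReal (ε ^ (n:ℝ)) * ∫⁻ x in Q, ENNReal.ofReal (|u x| ^ p)
      ≤ K * gagliardoP n s p Set.univ u := by
    calc ENNReal.ofReal (ε ^ (n:ℝ)) * ∫⁻ x in Q, ENNReal.ofReal (|u x| ^ p)
        = ∫⁻ x in Q, ENNReal.ofReal (ε ^ (n:ℝ)) * ENNReal.ofReal (|u x| ^ p) :=
          (lintegral_const_mul' _ _ ENNReal.ofReal_ne_top).symm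
      _ ≤ ∫⁻ x in Q, K * F x := by
          apply lintegral_mono_ae
          rw [ae_restrict_iff' hQmeas]
          exact ae_of_all _ inner
      _ = K * ∫⁻ x in Q, F x := lintegral_const_mul' _ _ ENNReal.ofReal_ne_top
      _ ≤ K * ∫⁻ x in Set.univ, F x := mul_le_mul_right (lintegral_mono_set (Set.subset_univ _)) _
      _ = K * gagliardoP n s p Set.univ u := rfl
  have hen_pos : (0:ℝ) < ε ^ (n:ℝ) := Real.rpow_pos_of_pos hε _
  have hen0 : ENNReal.ofReal (ε ^ (n:ℝ)) ≠ 0 := (ENNReal.ofReal_pos.mpr hen_pos).ne'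
  have hreal : (3 * (n:ℝ)) ^ α * ε ^ (s * p) = (3 * (n:ℝ) * ε) ^ α * (ε ^ (n:ℝ))⁻¹ := by
    rw [Real.mul_rpow h3n.le hε.le, mul_assoc]
    congr 1
    have hsp : s * p = α - (n:ℝ) := by rw [hα]; ring
    rw [hsp, Real.rpow_sub hε, div_eq_mul_inv]
  calc (∫⁻ x in Q, ENNReal.ofReal (|u x| ^ p))
      = (ENNReal.ofReal (ε ^ (n:ℝ)))⁻¹ *
          (ENNReal.ofReal (ε ^ (n:ℝ)) * ∫⁻ x in Q, ENNReal.ofReal (|u x| ^ p)) := by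
        rw [← mul_assoc, ENNReal.inv_mul_cancel hen0 ENNReal.ofReal_ne_top, one_mul]
    _ ≤ (ENNReal.ofReal (ε ^ (n:ℝ)))⁻¹ * (K * gagliardoP n s p Set.univ u) :=
        mul_le_mul_right main _
    _ = ((ENNReal.ofReal (ε ^ (n:ℝ)))⁻¹ * K) * gagliardoP n s p Set.univ u :=
        (mul_assoc _ _ _).symm
    _ = ENNReal.ofReal ((3 * (n:ℝ)) ^ α * ε ^ (s * p)) * gagliardoP n s p Set.univ u := by
        congr 1
        rw [hreal, ENNReal.ofReal_mul (Real.rpow_nonneg (by positivity) α),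
          ENNReal.ofReal_inv_of_pos hen_pos, mul_comm]
end

section
/- Let n ≥ 1, s ∈ (0,1), 1 < p < ∞, and let Q be the unit cube in ℝⁿ. There is a constant c, depending only on n, s and p, such that the following holds: for every ε > 0, every finite set F ⊂ ℤⁿ, and every v ∈ L^p(Ω₁), where Ω₁ = ∪_{z ∈ F} Q_{z,ε} and Q_{z,ε} = ε(z + Q), the piecewise average v̄_ε, defined on each cube Q_{z,ε} by v̄_ε(x) = ε^{−n} ∫_{Q_{z,ε}} v(y) dy for x ∈ Q_{z,ε}, satisfies ∫_{Ω₁} |v − v̄_ε|^p dx ≤ c^p ε^{sp} [v]_{W^{s,p}(Ω₁)}^p. -/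
open MeasureTheory ENNReal

/-- The cube `Q_{z,ε} = ε(z + Q)` for `z ∈ ℤⁿ` and `ε > 0`. -/
def latticeCube (n : ℕ) (z : Fin n → ℤ) (ε : ℝ) : Set (EuclideanSpace ℝ (Fin n)) :=
  {x | ∀ i, x i ∈ Set.Ico (ε * (z i : ℝ)) (ε * ((z i : ℝ) + 1))}

lemma latticeCube_measurable {n : ℕ} (z : Fin n → ℤ) (ε : ℝ) :
    MeasurableSet (latticeCube n z ε) := by
  have : latticeCube n z ε =
      ⋂ i, (fun x : EuclideanSpace ℝ (Fin n) => x i) ⁻¹'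
        Set.Ico (ε * (z i : ℝ)) (ε * ((z i : ℝ) + 1)) := by
    ext x; simp [latticeCube]
  rw [this]
  exact MeasurableSet.iInter fun i => ((measurable_pi_apply i).comp (WithLp.measurable_ofLp 2 _)) measurableSet_Ico

lemma latticeCube_volume {n : ℕ} (z : Fin n → ℤ) {ε : ℝ} (hε : 0 < ε) :
    volume (latticeCube n z ε) = ENNReal.ofReal (ε ^ n) := by
  have h1 : latticeCube n z ε = (MeasurableEquiv.toLp 2 (Fin n → ℝ)).symm ⁻¹'
      (Set.univ.pi fun i => Set.Ico (ε * (z i : ℝ)) (ε * ((z i : ℝ) + 1))) := by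
    ext x; exact (Set.mem_univ_pi (f := (MeasurableEquiv.toLp 2 (Fin n → ℝ)).symm x)).symm
  rw [h1, (EuclideanSpace.volume_preserving_symm_measurableEquiv_toLp (Fin n)).measure_preimage
    ((MeasurableSet.univ_pi fun i => measurableSet_Ico).nullMeasurableSet)]
  rw [volume_pi_pi]
  simp only [Real.volume_Ico]
  have : ∀ i : Fin n, ε * ((z i : ℝ) + 1) - ε * (z i : ℝ) = ε := by intro i; ring
  simp only [this]
  rw [Finset.prod_const, ← ENNReal.ofReal_pow hε.le]
  simp

lemma latticeCube_disjoint {n : ℕ} {z w : Fin n → ℤ} {ε : ℝ} (hε : 0 < ε) (hzw : z ≠ w) :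
    Disjoint (latticeCube n z ε) (latticeCube n w ε) := by
  rw [Set.disjoint_left]
  intro x hx hx'
  obtain ⟨i, hi⟩ := Function.ne_iff.mp hzw
  obtain ⟨h1, h2⟩ := hx i
  obtain ⟨h3, h4⟩ := hx' i
  rcases lt_or_gt_of_ne hi with h | h
  · have : (z i : ℝ) + 1 ≤ (w i : ℝ) := by exact_mod_cast h
    nlinarith
  · have : (w i : ℝ) + 1 ≤ (z i : ℝ) := by exact_mod_cast h
    nlinarith

lemma latticeCube_dist {n : ℕ} {z : Fin n → ℤ} {ε : ℝ} (hε : 0 < ε)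
    {x y : EuclideanSpace ℝ (Fin n)} (hx : x ∈ latticeCube n z ε) (hy : y ∈ latticeCube n z ε) :
    ‖x - y‖ ≤ Real.sqrt n * ε := by
  rw [EuclideanSpace.norm_eq]
  have hb : ∀ i, ‖(x - y) i‖ ^ 2 ≤ ε ^ 2 := by
    intro i
    obtain ⟨h1, h2⟩ := hx i
    obtain ⟨h3, h4⟩ := hy i
    have : (x - y) i = x i - y i := rfl
    rw [this, Real.norm_eq_abs, sq_abs]
    nlinarith
  calc √(∑ i, ‖(x - y) i‖ ^ 2) ≤ √(∑ _i : Fin n, ε ^ 2) :=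
        Real.sqrt_le_sqrt (Finset.sum_le_sum fun i _ => hb i)
    _ = Real.sqrt n * ε := by
        rw [Finset.sum_const, Finset.card_univ, Fintype.card_fin, nsmul_eq_mul,
          Real.sqrt_mul (by positivity), Real.sqrt_sq hε.le]

lemma ptwise {a r M e : ℝ} {p : ℝ} (ha : 0 ≤ a) (hM : 0 ≤ M) (he : 0 < e) (hp : 0 < p)
    (hr : 0 ≤ r) (hrM : r ≤ M) (h0 : r = 0 → a = 0) :
    a ^ p ≤ M ^ e * (a ^ p / r ^ e) := by
  rcases eq_or_lt_of_le hr with h | h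
  · rw [h0 h.symm, Real.zero_rpow hp.ne']
    positivity
  · have hre : 0 < r ^ e := Real.rpow_pos_of_pos h e
    calc a ^ p = (a ^ p / r ^ e) * r ^ e := by field_simp
      _ ≤ (a ^ p / r ^ e) * M ^ e :=
        mul_le_mul_of_nonneg_left (Real.rpow_le_rpow hr hrM he.le) (by positivity)
      _ = M ^ e * (a ^ p / r ^ e) := mul_comm _ _

lemma cube_bound (n : ℕ) {s p ε : ℝ} (hs0 : 0 < s) (hp : 1 < p) (hε : 0 < ε)
    (z : Fin n → ℤ) (v : EuclideanSpace ℝ (Fin n) → ℝ)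
    (hv : MemLp v (ENNReal.ofReal p) (volume.restrict (latticeCube n z ε))) :
    (∫⁻ x in latticeCube n z ε,
        ENNReal.ofReal (|v x - (∫ y in latticeCube n z ε, v y) / ε ^ n| ^ p)) *
      ENNReal.ofReal (ε ^ n)
      ≤ ENNReal.ofReal ((Real.sqrt n * ε) ^ ((n : ℝ) + s * p)) *
        ∫⁻ x in latticeCube n z ε, ∫⁻ y in latticeCube n z ε,
          ENNReal.ofReal (|v x - v y| ^ p / ‖x - y‖ ^ ((n : ℝ) + s * p)) := by
  set Q := latticeCube n z ε with hQ
  have hQm : MeasurableSet Q := latticeCube_measurable z ε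
  have hvol : volume Q = ENNReal.ofReal (ε ^ n) := latticeCube_volume z hε
  set E := ENNReal.ofReal (ε ^ n) with hE
  have hεn : (0:ℝ) < ε ^ n := pow_pos hε n
  have hE0 : E ≠ 0 := (ENNReal.ofReal_pos.2 hεn).ne'
  have hEtop : E ≠ ⊤ := ENNReal.ofReal_ne_top
  have hp0 : (0:ℝ) < p := by linarith
  haveI : IsFiniteMeasure (volume.restrict Q) :=
    ⟨by rw [Measure.restrict_apply_univ, hvol]; exact ENNReal.ofReal_lt_top⟩
  have hint : Integrable v (volume.restrict Q) :=
    hv.integrable (ENNReal.one_le_ofReal.2 hp.le)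
  have hmeasv : AEMeasurable v (volume.restrict Q) := hv.1.aemeasurable
  set A : ℝ := (∫ y in Q, v y) / ε ^ n with hA
  set e : ℝ := (n : ℝ) + s * p with he
  have he0 : 0 < e := by positivity
  set M : ℝ := Real.sqrt n * ε with hM
  have hM0 : 0 ≤ M := by positivity
  -- Step 1: basic triangle inequality bound
  have step1 : ∀ x, ENNReal.ofReal |v x - A| * E ≤ ∫⁻ y in Q, ENNReal.ofReal |v x - v y| := by
    intro x
    have hsub : Integrable (fun y => v x - v y) (volume.restrict Q) :=
      (integrable_const _).sub hint
    have key : |v x - A| * ε ^ n = |∫ y in Q, (v x - v y)| := by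
      rw [integral_sub (integrable_const _) hint, integral_const,
        measureReal_restrict_apply_univ, measureReal_def, hvol, ENNReal.toReal_ofReal hεn.le, smul_eq_mul]
      rw [← abs_of_pos hεn, ← abs_mul, abs_of_pos hεn]
      congr 1
      rw [hA, sub_mul, div_mul_cancel₀ _ hεn.ne', mul_comm]
    calc ENNReal.ofReal |v x - A| * E = ENNReal.ofReal (|v x - A| * ε ^ n) :=
          (ENNReal.ofReal_mul (abs_nonneg _)).symm
      _ = ENNReal.ofReal |∫ y in Q, (v x - v y)| := by rw [key]
      _ ≤ ENNReal.ofReal (∫ y in Q, |v x - v y|) := by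
          apply ENNReal.ofReal_le_ofReal
          simpa [Real.norm_eq_abs] using
            norm_integral_le_integral_norm (μ := volume.restrict Q) (fun y => v x - v y)
      _ = ∫⁻ y in Q, ENNReal.ofReal |v x - v y| :=
          ofReal_integral_eq_lintegral_ofReal hsub.abs (ae_of_all _ fun y => abs_nonneg _)
  -- Step 2: Hölder
  have hpq : p.HolderConjugate p.conjExponent := Real.HolderConjugate.conjExponent hp
  have step2 : ∀ x, (∫⁻ y in Q, ENNReal.ofReal |v x - v y|) ≤
      (∫⁻ y in Q, ENNReal.ofReal |v x - v y| ^ p) ^ (1/p) * E ^ (1/p.conjExponent) := by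
    intro x
    have hfm : AEMeasurable (fun y => ENNReal.ofReal |v x - v y|) (volume.restrict Q) :=
      (ENNReal.measurable_ofReal.comp measurable_abs).comp_aemeasurable (aemeasurable_const.sub hmeasv)
    have h := ENNReal.lintegral_mul_le_Lp_mul_Lq (volume.restrict Q) hpq hfm
      (aemeasurable_const : AEMeasurable (fun _ => (1:ℝ≥0∞)) _)
    simpa [hvol, Measure.restrict_apply_univ] using h
  -- Step 3: combined pointwise bound
  have step3 : ∀ x, ENNReal.ofReal (|v x - A| ^ p) * E ≤
      ∫⁻ y in Q, ENNReal.ofReal (|v x - v y| ^ p) := by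
    intro x
    have hIeq : (∫⁻ y in Q, ENNReal.ofReal (|v x - v y| ^ p)) =
        ∫⁻ y in Q, ENNReal.ofReal |v x - v y| ^ p := by
      refine lintegral_congr fun y => ?_
      rw [ENNReal.ofReal_rpow_of_nonneg (abs_nonneg _) hp0.le]
    rw [hIeq]
    set I : ℝ≥0∞ := ∫⁻ y in Q, ENNReal.ofReal |v x - v y| ^ p with hI
    set a : ℝ≥0∞ := ENNReal.ofReal |v x - A| with ha
    have h1 : a * E ≤ I ^ (1/p) * E ^ (1/p.conjExponent) := le_trans (step1 x) (step2 x)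
    have h2 : (a * E) ^ p ≤ (I ^ (1/p) * E ^ (1/p.conjExponent)) ^ p :=
      ENNReal.rpow_le_rpow h1 hp0.le
    rw [ENNReal.mul_rpow_of_nonneg _ _ hp0.le, ENNReal.mul_rpow_of_nonneg _ _ hp0.le,
      ← ENNReal.rpow_mul, ← ENNReal.rpow_mul] at h2
    have hq1 : (1/p) * p = 1 := by field_simp
    have hq2 : (1/p.conjExponent) * p = p - 1 := by
      have h := hpq.inv_add_inv_eq_one
      have hq0 : p.conjExponent ≠ 0 := hpq.symm.pos.ne'
      field_simp at h ⊢
      nlinarith [h]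
    rw [hq1, hq2, ENNReal.rpow_one] at h2
    have hEsplit : E ^ p = E ^ (p - 1) * E := by
      nth_rewrite 1 [show p = (p - 1) + 1 by ring]
      rw [ENNReal.rpow_add _ _ hE0 hEtop, ENNReal.rpow_one]
    rw [hEsplit] at h2
    have h3 : (a ^ p * E) * E ^ (p-1) ≤ I * E ^ (p-1) := by
      calc (a ^ p * E) * E ^ (p-1) = a ^ p * (E ^ (p-1) * E) := by ring
        _ ≤ I * E ^ (p-1) := h2
    have hc0 : E ^ (p-1) ≠ 0 := (ENNReal.rpow_pos (ENNReal.ofReal_pos.2 hεn) hEtop).ne'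
    have hct : E ^ (p-1) ≠ ⊤ := ENNReal.rpow_ne_top_of_nonneg (by linarith) hEtop
    have h4 : a ^ p * E ≤ I := (ENNReal.mul_le_mul_iff_left hc0 hct).mp h3
    calc ENNReal.ofReal (|v x - A| ^ p) * E = a ^ p * E := by
          rw [ha, ENNReal.ofReal_rpow_of_nonneg (abs_nonneg _) hp0.le]
      _ ≤ I := h4
  -- Step 4: integrate over x
  have step4 : (∫⁻ x in Q, ENNReal.ofReal (|v x - A| ^ p)) * E ≤
      ∫⁻ x in Q, ∫⁻ y in Q, ENNReal.ofReal (|v x - v y| ^ p) := by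
    rw [← lintegral_mul_const' E _ hEtop]
    exact lintegral_mono fun x => step3 x
  -- Step 5: Gagliardo comparison
  have step5 : (∫⁻ x in Q, ∫⁻ y in Q, ENNReal.ofReal (|v x - v y| ^ p)) ≤
      ENNReal.ofReal (M ^ e) *
        ∫⁻ x in Q, ∫⁻ y in Q, ENNReal.ofReal (|v x - v y| ^ p / ‖x - y‖ ^ e) := by
    rw [← lintegral_const_mul' _ _ ENNReal.ofReal_ne_top]
    apply lintegral_mono_ae
    filter_upwards [ae_restrict_mem hQm] with x hx
    rw [← lintegral_const_mul' _ _ ENNReal.ofReal_ne_top]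
    apply lintegral_mono_ae
    filter_upwards [ae_restrict_mem hQm] with y hy
    rw [← ENNReal.ofReal_mul (by positivity)]
    apply ENNReal.ofReal_le_ofReal
    refine ptwise (abs_nonneg _) hM0 he0 hp0 (norm_nonneg _) (latticeCube_dist hε hx hy) ?_
    intro hxy
    have : x = y := by rwa [norm_eq_zero, sub_eq_zero] at hxy
    simp [this]
  exact le_trans step4 step5

set_option maxHeartbeats 1000000 in
/-- There is a constant `c = c(n,s,p) > 0` such that for every `ε > 0`,
every finite `F ⊂ ℤⁿ` and every `v ∈ L^p(Ω₁)`, where `Ω₁ = ∪_{z ∈ F} Q_{z,ε}`, the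
piecewise average `v̄_ε` (equal on each cube `Q_{z,ε}` to `ε^{−n} ∫_{Q_{z,ε}} v`)
satisfies `∫_{Ω₁} |v − v̄_ε|^p ≤ c^p ε^{sp} [v]_{W^{s,p}(Ω₁)}^p`. -/
theorem piecewise_average_poincare
    (n : ℕ) (hn : 1 ≤ n) (s p : ℝ) (hs : s ∈ Set.Ioo (0 : ℝ) 1) (hp : 1 < p) :
    ∃ c : ℝ, 0 < c ∧ ∀ ε : ℝ, 0 < ε → ∀ F : Finset (Fin n → ℤ),
      ∀ v vbar : EuclideanSpace ℝ (Fin n) → ℝ,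
        MemLp v (ENNReal.ofReal p)
          (volume.restrict (⋃ z ∈ F, latticeCube n z ε)) →
        (∀ z ∈ F, ∀ x ∈ latticeCube n z ε,
          vbar x = (∫ y in latticeCube n z ε, v y) / ε ^ (n : ℕ)) →
        ∫⁻ x in ⋃ z ∈ F, latticeCube n z ε, ENNReal.ofReal (|v x - vbar x| ^ p)
          ≤ ENNReal.ofReal (c ^ p * ε ^ (s * p)) *
            gagliardoP n s p (⋃ z ∈ F, latticeCube n z ε) v := by
  obtain ⟨hs0, hs1⟩ := hs
  have hp0 : (0:ℝ) < p := by linarith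
  have hn0 : (0:ℝ) < n := by exact_mod_cast hn
  have hsqrt : (0:ℝ) < Real.sqrt n := Real.sqrt_pos.2 hn0
  have he0 : (0:ℝ) < (n : ℝ) + s * p := by positivity
  have hK0 : (0:ℝ) < Real.sqrt n ^ ((n : ℝ) + s * p) := Real.rpow_pos_of_pos hsqrt _
  refine ⟨(Real.sqrt n ^ ((n : ℝ) + s * p)) ^ (1/p), Real.rpow_pos_of_pos hK0 _, ?_⟩
  intro ε hε F v vbar hv hvbar
  have hcp : ((Real.sqrt n ^ ((n : ℝ) + s * p)) ^ (1/p)) ^ p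
      = Real.sqrt n ^ ((n : ℝ) + s * p) := by
    rw [← Real.rpow_mul hK0.le, one_div, inv_mul_cancel₀ hp0.ne', Real.rpow_one]
  rw [hcp]
  have hQm : ∀ z : Fin n → ℤ, MeasurableSet (latticeCube n z ε) :=
    fun z => latticeCube_measurable z ε
  have hdisj : (↑F : Set (Fin n → ℤ)).PairwiseDisjoint (fun z => latticeCube n z ε) :=
    fun a _ b _ hab => latticeCube_disjoint hε hab
  have hεn : (0:ℝ) < ε ^ n := pow_pos hε n
  have hE0 : ENNReal.ofReal (ε ^ n) ≠ 0 := (ENNReal.ofReal_pos.2 hεn).ne'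
  have hEtop : ENNReal.ofReal (ε ^ n) ≠ ⊤ := ENNReal.ofReal_ne_top
  rw [← ENNReal.mul_le_mul_iff_left hE0 hEtop]
  rw [lintegral_biUnion_finset hdisj (fun z _ => hQm z) _]
  have hMe : ENNReal.ofReal ((Real.sqrt n * ε) ^ ((n : ℝ) + s * p))
      = ENNReal.ofReal (Real.sqrt n ^ ((n : ℝ) + s * p) * ε ^ (s * p)) *
        ENNReal.ofReal (ε ^ n) := by
    rw [Real.mul_rpow hsqrt.le hε.le]
    have h1 : ε ^ ((n : ℝ) + s * p) = ε ^ (n : ℕ) * ε ^ (s * p) := by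
      rw [Real.rpow_add hε, Real.rpow_natCast]
    rw [h1, ← ENNReal.ofReal_mul (by positivity)]
    ring_nf
  calc (∑ z ∈ F, ∫⁻ x in latticeCube n z ε, ENNReal.ofReal (|v x - vbar x| ^ p)) *
        ENNReal.ofReal (ε ^ n)
      = ∑ z ∈ F, (∫⁻ x in latticeCube n z ε,
          ENNReal.ofReal (|v x - (∫ y in latticeCube n z ε, v y) / ε ^ n| ^ p)) *
          ENNReal.ofReal (ε ^ n) := by
        rw [Finset.sum_mul]
        refine Finset.sum_congr rfl fun z hz => ?_
        congr 1
        refine setLIntegral_congr_fun (hQm z) (fun x hx => ?_)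
        rw [hvbar z hz x hx]
    _ ≤ ∑ z ∈ F, ENNReal.ofReal ((Real.sqrt n * ε) ^ ((n : ℝ) + s * p)) *
          ∫⁻ x in latticeCube n z ε, ∫⁻ y in latticeCube n z ε,
            ENNReal.ofReal (|v x - v y| ^ p / ‖x - y‖ ^ ((n : ℝ) + s * p)) :=
      by
        refine Finset.sum_le_sum fun z hz => ?_
        have hsub : latticeCube n z ε ⊆ ⋃ z ∈ F, latticeCube n z ε := by
          intro x hx
          simp only [Set.mem_iUnion]
          exact ⟨z, hz, hx⟩
        exact cube_bound n hs0 hp hε z v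
          (hv.mono_measure (Measure.restrict_mono hsub le_rfl))
    _ = ENNReal.ofReal ((Real.sqrt n * ε) ^ ((n : ℝ) + s * p)) *
          ∑ z ∈ F, ∫⁻ x in latticeCube n z ε, ∫⁻ y in latticeCube n z ε,
            ENNReal.ofReal (|v x - v y| ^ p / ‖x - y‖ ^ ((n : ℝ) + s * p)) :=
        (Finset.mul_sum _ _ _).symm
    _ ≤ ENNReal.ofReal ((Real.sqrt n * ε) ^ ((n : ℝ) + s * p)) *
          gagliardoP n s p (⋃ z ∈ F, latticeCube n z ε) v := by
        refine mul_le_mul_right ?_ _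
        have h1 : ∀ z ∈ F, (∫⁻ x in latticeCube n z ε, ∫⁻ y in latticeCube n z ε,
            ENNReal.ofReal (|v x - v y| ^ p / ‖x - y‖ ^ ((n : ℝ) + s * p)))
            ≤ ∫⁻ x in latticeCube n z ε, ∫⁻ y in ⋃ z ∈ F, latticeCube n z ε,
              ENNReal.ofReal (|v x - v y| ^ p / ‖x - y‖ ^ ((n : ℝ) + s * p)) :=
          fun z hz => by
            have hsub : latticeCube n z ε ⊆ ⋃ z ∈ F, latticeCube n z ε := by
              intro x hx
              simp only [Set.mem_iUnion]
              exact ⟨z, hz, hx⟩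
            exact lintegral_mono fun x => lintegral_mono'
              (Measure.restrict_mono hsub le_rfl) le_rfl
        calc (∑ z ∈ F, ∫⁻ x in latticeCube n z ε, ∫⁻ y in latticeCube n z ε,
              ENNReal.ofReal (|v x - v y| ^ p / ‖x - y‖ ^ ((n : ℝ) + s * p)))
            ≤ ∑ z ∈ F, ∫⁻ x in latticeCube n z ε, ∫⁻ y in ⋃ z ∈ F, latticeCube n z ε,
              ENNReal.ofReal (|v x - v y| ^ p / ‖x - y‖ ^ ((n : ℝ) + s * p)) :=
            Finset.sum_le_sum h1
          _ = gagliardoP n s p (⋃ z ∈ F, latticeCube n z ε) v :=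
            (lintegral_biUnion_finset hdisj (fun z _ => hQm z) _).symm
    _ = (ENNReal.ofReal (Real.sqrt n ^ ((n : ℝ) + s * p) * ε ^ (s * p)) *
          gagliardoP n s p (⋃ z ∈ F, latticeCube n z ε) v) * ENNReal.ofReal (ε ^ n) := by
        rw [hMe]; ring
end
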